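/- If t is a winning strategy for the game G²_Φ associated with the arithmetical formula Φ ≡ ∃^N x₁ ∀^N y₁ … ∃^N x_h ∀^N y_h (f(x⃗,y⃗)=0), then t universally realizes Φ. -/
import Mathlib


mutual
  /-- Terms of the λc-calculus (de Bruijn indices for λ-variables):
  variables, abstraction, application, continuation constants `k_π`, and
  instructions `κ ∈ C` (with `instr 0` playing the role of `cc`). -/
  inductive Term : Type
    | var : ℕ → Term
    | lam : Term → Term
    | app : Term → Term → Term
    | cont : Stack → Term
    | instr : ℕ → Term

  /-- Stacks of the λc-calculus: stack constants `α ∈ B` and push `t·π`. -/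
  inductive Stack : Type
    | sconst : ℕ → Stack
    | cons : Term → Stack → Stack
end

/-- The instruction `cc` (call/cc). -/
def cc : Term := .instr 0

/-- Substitution `t{x := u}` of the λ-variable of de Bruijn index `n` by the
(closed) term `u`; it does not propagate through continuation constants. -/
def Term.subst : Term → ℕ → Term → Term
  | .var m, n, u => if m = n then u else if n < m then .var (m - 1) else .var m
  | .lam t, n, u => .lam (t.subst (n + 1) u)
  | .app t₁ t₂, n, u => .app (t₁.subst n u) (t₂.subst n u)
  | .cont π, _, _ => .cont π
  | .instr k, _, _ => .instr k

/-- One-step evaluation of the Krivine Abstract Machine: the union of the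
four rules (Push), (Grab), (Save), (Restore). -/
inductive Step : Term × Stack → Term × Stack → Prop
  | push (t u : Term) (π : Stack) : Step (.app t u, π) (t, .cons u π)
  | grab (t u : Term) (π : Stack) : Step (.lam t, .cons u π) (t.subst 0 u, π)
  | save (t : Term) (π : Stack) : Step (cc, .cons t π) (t, .cons (.cont π) π)
  | restore (t : Term) (π π' : Stack) : Step (.cont π, .cons t π') (t, π)

/-- Church-style encoding of zero: `λx f. x`. -/
def zeroT : Term := .lam (.lam (.var 1))

/-- Church-style encoding of the successor: `λn x f. f (n x f)`. -/
def succT : Term :=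
  .lam (.lam (.lam (.app (.var 0) (.app (.app (.var 2) (.var 1)) (.var 0)))))

/-- The numeral `n̄ ≡ s̄ⁿ 0̄`. -/
def num : ℕ → Term
  | 0 => zeroT
  | n + 1 => .app succT (num n)

/-- Multi-step evaluation `≻`. -/
def StarStep : Term × Stack → Term × Stack → Prop := Relation.ReflTransGen Step

/-- A history entry: an ∃-position `(m⃗_i, n⃗_i, u, π)`. -/
abbrev Hist := List ℕ × List ℕ × Term × Stack

/-- Winning states of the cumulative game `G²_Φ` for the arithmetical formula
`Φ ≡ ∃x₁∀y₁…∃x_h∀y_h (f(x⃗,y⃗)=0)`.  A state is a pair `⟨P, H⟩` of a set of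
processes and a history.  (Win): some `p ∈ P` reaches `u ⋆ π` for a complete
position `(m⃗_h, n⃗_h, u, π) ∈ H` with `f(m⃗_h, n⃗_h) = 0`.  (Play): some
`p ∈ P` reaches `u ⋆ m̄'·ξ·π` for a position `(m⃗_i, n⃗_i, u, π) ∈ H` of size
`i < h`, and for every Abelard answer `(n', u', π')` the extended state is
winning. -/
inductive W2 (h : ℕ) (f : List ℕ → List ℕ → ℕ) :
    Set (Term × Stack) → Set Hist → Prop
  | win (P : Set (Term × Stack)) (H : Set Hist) (p : Term × Stack)
      (ms ns : List ℕ) (u : Term) (π : Stack) :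
      p ∈ P → (ms, ns, u, π) ∈ H → ms.length = h → ns.length = h →
      StarStep p (u, π) → f ms ns = 0 → W2 h f P H
  | play (P : Set (Term × Stack)) (H : Set Hist) (p : Term × Stack)
      (ms ns : List ℕ) (i : ℕ) (u : Term) (π : Stack) (m' : ℕ) (ξ : Term) :
      p ∈ P → (ms, ns, u, π) ∈ H → ms.length = i → ns.length = i → i < h →
      StarStep p (u, .cons (num m') (.cons ξ π)) →
      (∀ (n' : ℕ) (u' : Term) (π' : Stack),
        W2 h f (P ∪ {(ξ, .cons (num n') (.cons u' π'))})
               (H ∪ {(ms ++ [m'], ns ++ [n'], u', π')})) →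
      W2 h f P H

/-- A pole: a set of processes closed under anti-evaluation. -/
def IsPole (B : Set (Term × Stack)) : Prop :=
  ∀ p p', StarStep p p' → p' ∈ B → p ∈ B

/-- Truth value `S^⊥` of a falsity value `S` w.r.t. a pole `B`. -/
def orth (B : Set (Term × Stack)) (S : Set Stack) : Set Term :=
  {t | ∀ π ∈ S, (t, π) ∈ B}

/-- Falsity value of the relativized arithmetical formula with `k` remaining
blocks of quantifiers and accumulated witnesses `ms`, `ns`:
`FV B f k ms ns = ‖∃ᴺx₁∀ᴺy₁…∃ᴺx_k∀ᴺy_k (f(m⃗·x⃗, n⃗·y⃗) = 0)‖` w.r.t. the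
pole `B`, where `f(e⃗) = 0` is Leibniz equality
`∀W (W(f(e⃗)) ⇒ W(0))`, `∃ᴺx A ≡ ∀Z (∀x ({x} ⇒ A ⇒ Z) ⇒ Z)` and
`∀ᴺy A ≡ ∀y ({y} ⇒ A)`, with `‖{e} ⇒ A‖ = {n̄·π : ⟦e⟧ = n, π ∈ ‖A‖}`. -/
def FV (B : Set (Term × Stack)) (f : List ℕ → List ℕ → ℕ) :
    ℕ → List ℕ → List ℕ → Set Stack
  | 0, ms, ns =>
      {σ | ∃ (F : ℕ → Set Stack) (t : Term) (π : Stack),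
        t ∈ orth B (F (f ms ns)) ∧ π ∈ F 0 ∧ σ = .cons t π}
  | k + 1, ms, ns =>
      {σ | ∃ (S : Set Stack) (t : Term) (π : Stack),
        t ∈ orth B {σ' | ∃ (m : ℕ) (u : Term) (π' : Stack),
          u ∈ orth B {σ'' | ∃ (n : ℕ) (π'' : Stack),
            π'' ∈ FV B f k (ms ++ [m]) (ns ++ [n]) ∧ σ'' = .cons (num n) π''} ∧
          π' ∈ S ∧ σ' = .cons (num m) (.cons u π')} ∧
        π ∈ S ∧ σ = .cons t π}

lemma FV_cons (B : Set (Term × Stack)) (f : List ℕ → List ℕ → ℕ)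
    (k : ℕ) (ms ns : List ℕ) (σ : Stack) (hσ : σ ∈ FV B f k ms ns) :
    ∃ u π, σ = Stack.cons u π := by
  cases k <;> obtain ⟨_, t, π, _, _, hσ⟩ := hσ <;> exact ⟨t, π, hσ⟩

lemma W2_key (h : ℕ) (f : List ℕ → List ℕ → ℕ) (B : Set (Term × Stack))
    (hB : IsPole B) (P : Set (Term × Stack)) (H : Set Hist)
    (hw : W2 h f P H)
    (hH : ∀ ms ns u π, (ms, ns, u, π) ∈ H →
      Stack.cons u π ∈ FV B f (h - ms.length) ms ns) :
    ∃ p ∈ P, p ∈ B := by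
  revert hH
  induction hw with
  | win P H p ms ns u π hp hmem hms hns hstep hf =>
    intro hH
    refine ⟨p, hp, hB _ _ hstep ?_⟩
    have hg := hH ms ns u π hmem
    rw [hms, Nat.sub_self] at hg
    obtain ⟨F, t', π', ht', hπ', heq⟩ := hg
    injection heq with h1 h2
    subst h1; subst h2
    exact ht' _ (hf ▸ hπ')
  | play P H p ms ns i u π m' ξ hp hmem hms hns hih hstep _ ih =>
    intro hH
    by_cases hpb : (u, Stack.cons (num m') (Stack.cons ξ π)) ∈ B
    · exact ⟨p, hp, hB _ _ hstep hpb⟩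
    · have hg := hH ms ns u π hmem
      have hk : h - ms.length = (h - i - 1) + 1 := by omega
      rw [hk] at hg
      obtain ⟨S, t', π', ht', hπ', heq⟩ := hg
      injection heq with h1 h2
      subst h1; subst h2
      by_cases hξ : ∀ (n' : ℕ) (π'' : Stack),
          π'' ∈ FV B f (h - i - 1) (ms ++ [m']) (ns ++ [n']) →
          (ξ, Stack.cons (num n') π'') ∈ B
      · exact absurd (ht' _ ⟨m', ξ, π, fun σ'' hσ'' => by
          obtain ⟨n, π'', h1, rfl⟩ := hσ''; exact hξ n π'' h1, hπ', rfl⟩) hpb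
      · push_neg at hξ
        obtain ⟨n', π'', hπ'', hnb⟩ := hξ
        obtain ⟨u', πr, rfl⟩ := FV_cons _ _ _ _ _ _ hπ''
        obtain ⟨p', hp', hpB⟩ := ih n' u' πr (by
          rintro ms0 ns0 u0 π0 (hm0 | hm0)
          · exact hH ms0 ns0 u0 π0 hm0
          · simp only [Set.mem_singleton_iff, Prod.mk.injEq] at hm0
            obtain ⟨rfl, rfl, rfl, rfl⟩ := hm0
            have : (ms ++ [m']).length = i + 1 := by simp [hms]
            rw [this]
            have : h - (i + 1) = h - i - 1 := by omega
            rw [this]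
            exact hπ'')
        rcases hp' with hp' | hp'
        · exact ⟨p', hp', hpB⟩
        · simp only [Set.mem_singleton_iff] at hp'
          subst hp'
          exact absurd hpB hnb

/-- Adequacy of the game `G²`: if `t` is a winning strategy for `G²_Φ`, where
`Φ ≡ ∃ᴺx₁∀ᴺy₁…∃ᴺx_h∀ᴺy_h (f(x⃗,y⃗)=0)`, then `t` universally realizes `Φ`. -/
theorem W2_winning_strategy_realizes (h : ℕ) (f : List ℕ → List ℕ → ℕ)
    (t : Term)
    (hwin : ∀ (u : Term) (π : Stack),
      W2 h f {(t, .cons u π)} {([], [], u, π)}) :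
    ∀ B : Set (Term × Stack), IsPole B → t ∈ orth B (FV B f h [] []) := by
  intro B hB π hπ
  obtain ⟨u, π₀, rfl⟩ := FV_cons _ _ _ _ _ _ hπ
  obtain ⟨p, hp, hpB⟩ := W2_key h f B hB _ _ (hwin u π₀) (by
    rintro ms ns u' π' hm
    simp only [Set.mem_singleton_iff, Prod.mk.injEq] at hm
    obtain ⟨rfl, rfl, rfl, rfl⟩ := hm
    simpa using hπ)
  simp only [Set.mem_singleton_iff] at hp
  subst hp
  exact hpB
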